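/- arXiv:2206.00555 — 3 statements merged into one kernel-verified Lean document; each statement's English description precedes it below -/
import Mathlib

section
/- Let R > 0, n ≥ 1, and let λ₁, …, λₙ ∈ ℝ be all nonzero. Define τ̄ := max( Σ_{i : λᵢ > 0} 2R/λᵢ , Σ_{i : λᵢ < 0} 2R/(−λᵢ) ). Then for every x ∈ ℝ and every t ≥ 0, the Lebesgue measure of the union ⋃_{i=1}^n {s ∈ [0, t] : |x − λᵢ·(t − s)| ≤ R} is at most τ̄. In particular, if x ≥ R the measure is at most Σ_{i : λᵢ > 0} 2R/λᵢ, and if x ≤ −R it is at most Σ_{i : λᵢ < 0} 2R/(−λᵢ). -/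
open MeasureTheory Set

private lemma seg_subset_pos {R x t l : ℝ} (hl : 0 < l) :
    {s : ℝ | s ∈ Set.Icc 0 t ∧ |x - l * (t - s)| ≤ R} ⊆
      Set.Icc (t - (x + R) / l) (t - (x - R) / l) := by
  rintro s ⟨⟨hs0, hst⟩, habs⟩
  rw [abs_le] at habs
  constructor
  · have h1 : (t - s) * l ≤ x + R := by nlinarith [habs.1]
    have := (le_div_iff₀ hl).mpr h1
    linarith
  · have h2 : x - R ≤ (t - s) * l := by nlinarith [habs.2]
    have := (div_le_iff₀ hl).mpr h2
    linarith

private lemma set_flip {R x t l : ℝ} :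
    {s : ℝ | s ∈ Set.Icc 0 t ∧ |x - l * (t - s)| ≤ R} =
      {s : ℝ | s ∈ Set.Icc 0 t ∧ |(-x) - (-l) * (t - s)| ≤ R} := by
  ext s
  have h : (-x) - (-l) * (t - s) = -(x - l * (t - s)) := by ring
  simp only [Set.mem_setOf_eq]
  rw [h, abs_neg]

private lemma vol_single_pos {R x t l : ℝ} (hl : 0 < l) :
    MeasureTheory.volume {s : ℝ | s ∈ Set.Icc 0 t ∧ |x - l * (t - s)| ≤ R}
      ≤ ENNReal.ofReal (2 * R / l) := by
  calc MeasureTheory.volume {s : ℝ | s ∈ Set.Icc 0 t ∧ |x - l * (t - s)| ≤ R}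
      ≤ MeasureTheory.volume (Set.Icc (t - (x + R) / l) (t - (x - R) / l)) :=
        measure_mono (seg_subset_pos hl)
    _ = ENNReal.ofReal ((t - (x - R) / l) - (t - (x + R) / l)) := Real.volume_Icc
    _ = ENNReal.ofReal (2 * R / l) := by
        congr 1
        field_simp
        ring

private lemma vol_single_neg {R x t l : ℝ} (hl : l < 0) :
    MeasureTheory.volume {s : ℝ | s ∈ Set.Icc 0 t ∧ |x - l * (t - s)| ≤ R}
      ≤ ENNReal.ofReal (2 * R / (-l)) := by
  rw [set_flip]
  exact vol_single_pos (neg_pos.mpr hl)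

private lemma sub_singleton_of_neg {R x t l : ℝ} (hx : R ≤ x) (hl : l < 0) :
    {s : ℝ | s ∈ Set.Icc 0 t ∧ |x - l * (t - s)| ≤ R} ⊆ {t} := by
  rintro s ⟨⟨hs0, hst⟩, habs⟩
  rw [abs_le] at habs
  have h1 : 0 ≤ -l * (t - s) := mul_nonneg (by linarith) (by linarith)
  have h2 : -l * (t - s) ≤ 0 := by nlinarith [habs.2]
  have heq : -l * (t - s) = 0 := le_antisymm h2 h1
  rcases mul_eq_zero.mp heq with h | h
  · linarith
  · simp only [Set.mem_singleton_iff]; linarith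

private lemma sub_singleton_of_pos {R x t l : ℝ} (hx : x ≤ -R) (hl : 0 < l) :
    {s : ℝ | s ∈ Set.Icc 0 t ∧ |x - l * (t - s)| ≤ R} ⊆ {t} := by
  rw [set_flip]
  exact sub_singleton_of_neg (by linarith) (by linarith)

private lemma mid_subset {R x t l : ℝ} (hx1 : -R ≤ x) (hx2 : x ≤ R) (hl : l ≠ 0) :
    {s : ℝ | s ∈ Set.Icc 0 t ∧ |x - l * (t - s)| ≤ R} ⊆
      Set.Icc (t - (if 0 < l then 2 * R / l else 2 * R / (-l))) t := by
  rcases hl.lt_or_gt with h | h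
  · rw [if_neg (not_lt.mpr h.le)]
    intro s hs
    have hst : s ≤ t := hs.1.2
    rw [set_flip] at hs
    have hseg := seg_subset_pos (neg_pos.mpr h) hs
    have hle : (-x + R) / (-l) ≤ 2 * R / (-l) :=
      (div_le_div_iff_of_pos_right (neg_pos.mpr h)).mpr (by linarith)
    exact ⟨by linarith [hseg.1], hst⟩
  · rw [if_pos h]
    intro s hs
    have hst : s ≤ t := hs.1.2
    have hseg := seg_subset_pos h hs
    have hle : (x + R) / l ≤ 2 * R / l := (div_le_div_iff_of_pos_right h).mpr (by linarith)
    exact ⟨by linarith [hseg.1], hst⟩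

/-- Sharpened bound on the total undamped time: with
`τ̄ = max(Σ_{λᵢ>0} 2R/λᵢ, Σ_{λᵢ<0} 2R/(−λᵢ))`, the measure of
`⋃ᵢ {s ∈ [0,t] : |x − λᵢ(t−s)| ≤ R}` is at most `τ̄` for every `x` and `t ≥ 0`;
moreover for `x ≥ R` it is at most the sum over positive speeds, and for `x ≤ −R`
at most the sum over negative speeds. -/
theorem stmt_10 (R : ℝ) (hR : 0 < R) (n : ℕ) (hn : 1 ≤ n) (lam : Fin n → ℝ)
    (hlam : ∀ i, lam i ≠ 0) :
    ∀ x t : ℝ, 0 ≤ t →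
      (MeasureTheory.volume
          (⋃ i : Fin n, {s : ℝ | s ∈ Set.Icc 0 t ∧ |x - lam i * (t - s)| ≤ R})
        ≤ ENNReal.ofReal
            (max (∑ i ∈ Finset.univ.filter (fun i => 0 < lam i), 2 * R / lam i)
                 (∑ i ∈ Finset.univ.filter (fun i => lam i < 0), 2 * R / (-lam i))))
      ∧ (R ≤ x →
          MeasureTheory.volume
            (⋃ i : Fin n, {s : ℝ | s ∈ Set.Icc 0 t ∧ |x - lam i * (t - s)| ≤ R})
          ≤ ENNReal.ofReal (∑ i ∈ Finset.univ.filter (fun i => 0 < lam i), 2 * R / lam i))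
      ∧ (x ≤ -R →
          MeasureTheory.volume
            (⋃ i : Fin n, {s : ℝ | s ∈ Set.Icc 0 t ∧ |x - lam i * (t - s)| ≤ R})
          ≤ ENNReal.ofReal
              (∑ i ∈ Finset.univ.filter (fun i => lam i < 0), 2 * R / (-lam i))) := by
  intro x t ht
  set S : Fin n → Set ℝ :=
    fun i => {s : ℝ | s ∈ Set.Icc 0 t ∧ |x - lam i * (t - s)| ≤ R} with hS
  set Ppos : ℝ := ∑ i ∈ Finset.univ.filter (fun i => 0 < lam i), 2 * R / lam i with hPpos
  set Pneg : ℝ := ∑ i ∈ Finset.univ.filter (fun i => lam i < 0), 2 * R / (-lam i) with hPneg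
  have hPpos_nonneg : 0 ≤ Ppos := by
    apply Finset.sum_nonneg
    intro i hi
    have := (Finset.mem_filter.mp hi).2
    positivity
  have hPneg_nonneg : 0 ≤ Pneg := by
    apply Finset.sum_nonneg
    intro i hi
    have h := (Finset.mem_filter.mp hi).2
    have : 0 < -lam i := by linarith
    positivity
  -- bound for x ≥ R
  have key_pos : R ≤ x → MeasureTheory.volume (⋃ i, S i) ≤ ENNReal.ofReal Ppos := by
    intro hx
    calc MeasureTheory.volume (⋃ i, S i) ≤ ∑ i, MeasureTheory.volume (S i) :=
          measure_iUnion_fintype_le _ _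
      _ = (∑ i ∈ Finset.univ.filter (fun i => 0 < lam i), MeasureTheory.volume (S i))
          + ∑ i ∈ Finset.univ.filter (fun i => ¬ 0 < lam i), MeasureTheory.volume (S i) :=
          (Finset.sum_filter_add_sum_filter_not _ _ _).symm
      _ ≤ (∑ i ∈ Finset.univ.filter (fun i => 0 < lam i), ENNReal.ofReal (2 * R / lam i))
          + 0 := by
          apply add_le_add
          · exact Finset.sum_le_sum fun i hi =>
              vol_single_pos (Finset.mem_filter.mp hi).2
          · apply le_of_eq
            apply Finset.sum_eq_zero
            intro i hi
            have hneg : lam i < 0 :=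
              (hlam i).lt_or_gt.resolve_right (Finset.mem_filter.mp hi).2
            exact measure_mono_null (sub_singleton_of_neg hx hneg) (measure_singleton t)
      _ = ENNReal.ofReal Ppos := by
          rw [add_zero, hPpos, ENNReal.ofReal_sum_of_nonneg]
          intro i hi
          have := (Finset.mem_filter.mp hi).2
          positivity
  -- bound for x ≤ -R
  have key_neg : x ≤ -R → MeasureTheory.volume (⋃ i, S i) ≤ ENNReal.ofReal Pneg := by
    intro hx
    calc MeasureTheory.volume (⋃ i, S i) ≤ ∑ i, MeasureTheory.volume (S i) :=
          measure_iUnion_fintype_le _ _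
      _ = (∑ i ∈ Finset.univ.filter (fun i => lam i < 0), MeasureTheory.volume (S i))
          + ∑ i ∈ Finset.univ.filter (fun i => ¬ lam i < 0), MeasureTheory.volume (S i) :=
          (Finset.sum_filter_add_sum_filter_not _ _ _).symm
      _ ≤ (∑ i ∈ Finset.univ.filter (fun i => lam i < 0), ENNReal.ofReal (2 * R / (-lam i)))
          + 0 := by
          apply add_le_add
          · exact Finset.sum_le_sum fun i hi =>
              vol_single_neg (Finset.mem_filter.mp hi).2
          · apply le_of_eq
            apply Finset.sum_eq_zero
            intro i hi
            have hpos : 0 < lam i :=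
              (hlam i).lt_or_gt.resolve_left (Finset.mem_filter.mp hi).2
            exact measure_mono_null (sub_singleton_of_pos hx hpos) (measure_singleton t)
      _ = ENNReal.ofReal Pneg := by
          rw [add_zero, hPneg, ENNReal.ofReal_sum_of_nonneg]
          intro i hi
          have h := (Finset.mem_filter.mp hi).2
          have : 0 < -lam i := by linarith
          positivity
  -- bound in the middle region
  have key_mid : -R ≤ x → x ≤ R →
      MeasureTheory.volume (⋃ i, S i) ≤ ENNReal.ofReal (max Ppos Pneg) := by
    intro hx1 hx2
    have hne : (Finset.univ : Finset (Fin n)).Nonempty := ⟨⟨0, hn⟩, Finset.mem_univ _⟩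
    set c : Fin n → ℝ := fun i => if 0 < lam i then 2 * R / lam i else 2 * R / (-lam i)
      with hc
    set M : ℝ := Finset.univ.sup' hne c with hM
    have hsub : (⋃ i, S i) ⊆ Set.Icc (t - M) t := by
      apply Set.iUnion_subset
      intro i
      refine (mid_subset hx1 hx2 (hlam i)).trans ?_
      apply Set.Icc_subset_Icc_left
      have : c i ≤ M := Finset.le_sup' c (Finset.mem_univ i)
      simp only [hc] at this
      linarith
    calc MeasureTheory.volume (⋃ i, S i) ≤ MeasureTheory.volume (Set.Icc (t - M) t) :=
          measure_mono hsub
      _ = ENNReal.ofReal (t - (t - M)) := Real.volume_Icc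
      _ ≤ ENNReal.ofReal (max Ppos Pneg) := by
          apply ENNReal.ofReal_le_ofReal
          have : t - (t - M) = M := by ring
          rw [this]
          obtain ⟨j, -, hj⟩ := Finset.exists_mem_eq_sup' hne c
          rw [hM, hj]
          rcases (hlam j).lt_or_gt with h | h
          · have hcj : c j = 2 * R / (-lam j) := by
              rw [hc]; simp [not_lt.mpr h.le]
            rw [hcj]
            refine le_trans ?_ (le_max_right _ _)
            apply Finset.single_le_sum (f := fun i => 2 * R / (-lam i))
              (fun i hi => ?_) (Finset.mem_filter.mpr ⟨Finset.mem_univ j, h⟩)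
            have h2 := (Finset.mem_filter.mp hi).2
            have : 0 < -lam i := by linarith
            positivity
          · have hcj : c j = 2 * R / lam j := by rw [hc]; simp [h]
            rw [hcj]
            refine le_trans ?_ (le_max_left _ _)
            apply Finset.single_le_sum (f := fun i => 2 * R / lam i)
              (fun i hi => ?_) (Finset.mem_filter.mpr ⟨Finset.mem_univ j, h⟩)
            have := (Finset.mem_filter.mp hi).2
            positivity
  refine ⟨?_, key_pos, key_neg⟩
  by_cases hx : R ≤ x
  · exact (key_pos hx).trans (ENNReal.ofReal_le_ofReal (le_max_left _ _))
  · by_cases hx' : x ≤ -R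
    · exact (key_neg hx').trans (ENNReal.ofReal_le_ofReal (le_max_right _ _))
    · exact key_mid (by linarith [not_le.mp hx']) (by linarith [not_le.mp hx])
end

section
/- Let R > 0, n ≥ 1, and let λ₁, …, λₙ ∈ ℝ be all nonzero. If |x| ≤ R and t ≥ 0, then the Lebesgue measure of the union ⋃_{i=1}^n {s ∈ [0, t] : |x − λᵢ·(t − s)| ≤ R} is at most max_{1 ≤ i ≤ n} 2R/|λᵢ|. -/
/-- If the observation point `x` lies inside the undamped region `[−R, R]`, the total
time that the backward characteristics through `(x, t)` spend in the undamped region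
is at most `max_{1 ≤ i ≤ n} 2R/|λᵢ|`. -/
theorem stmt_11 (R : ℝ) (hR : 0 < R) (n : ℕ) (hn : 1 ≤ n) (lam : Fin n → ℝ)
    (hlam : ∀ i, lam i ≠ 0) (x t : ℝ) (hx : |x| ≤ R) (ht : 0 ≤ t) :
    MeasureTheory.volume
        (⋃ i : Fin n, {s : ℝ | s ∈ Set.Icc 0 t ∧ |x - lam i * (t - s)| ≤ R})
      ≤ ENNReal.ofReal
          (Finset.univ.sup' ⟨⟨0, hn⟩, Finset.mem_univ _⟩
            (fun i : Fin n => 2 * R / |lam i|)) := by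
  set M := Finset.univ.sup' ⟨⟨0, hn⟩, Finset.mem_univ _⟩
            (fun i : Fin n => 2 * R / |lam i|) with hM
  have hsub : (⋃ i : Fin n, {s : ℝ | s ∈ Set.Icc 0 t ∧ |x - lam i * (t - s)| ≤ R})
      ⊆ Set.Icc (t - M) t := by
    rintro s hs
    simp only [Set.mem_iUnion, Set.mem_setOf_eq] at hs
    obtain ⟨i, ⟨hs0, hst⟩, habs⟩ := hs
    have hli : 0 < |lam i| := abs_pos.mpr (hlam i)
    have h1 : |lam i| * (t - s) ≤ 2 * R := by
      have : |lam i * (t - s)| ≤ 2 * R := by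
        calc |lam i * (t - s)| ≤ |x - lam i * (t - s)| + |x| := by
              have := abs_sub_abs_le_abs_sub (lam i * (t - s)) x
              have h2 := abs_sub_comm (lam i * (t - s)) x
              nlinarith [abs_nonneg x, abs_add_le (x - lam i * (t - s)) x,
                abs_sub_abs_le_abs_sub (lam i * (t - s)) x]
          _ ≤ R + R := add_le_add habs hx
          _ = 2 * R := by ring
      calc |lam i| * (t - s) ≤ |lam i| * |t - s| := by
            have := le_abs_self (t - s); nlinarith [abs_nonneg (lam i)]
        _ = |lam i * (t - s)| := (abs_mul _ _).symm
        _ ≤ 2 * R := this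
    have h2 : t - s ≤ 2 * R / |lam i| := by
      rw [le_div_iff₀ hli]; nlinarith
    have h3 : 2 * R / |lam i| ≤ M := Finset.le_sup' (fun i : Fin n => 2 * R / |lam i|) (Finset.mem_univ i)
    constructor <;> linarith
  calc MeasureTheory.volume _ ≤ MeasureTheory.volume (Set.Icc (t - M) t) :=
        MeasureTheory.measure_mono hsub
    _ = ENNReal.ofReal (t - (t - M)) := Real.volume_Icc
    _ = ENNReal.ofReal M := by norm_num
end

section
/- Let R > 0, let p ≥ 2, and let μ₁ > μ₂ > … > μ_p > 0 be real numbers. Set x* := R·(μ_{p−1} + μ_p)/(μ_{p−1} − μ_p). Then the following are equivalent: (i) for every i ∈ {2, …, p}, (x* − R)/μᵢ = (x* + R)/μ_{i−1}; (ii) for every i ∈ {2, …, p}, μ_{i−1}/μᵢ = μ_{p−1}/μ_p. In particular, the p characteristics through the point x* occupy the undamped region consecutively without gaps or overlaps if and only if the speeds satisfy the constant-ratio (geometric progression) condition μ_{i−1}/μᵢ = μ_{p−1}/μ_p for all i. -/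
lemma aux_14 (R a b c d : ℝ) (hR : 0 < R) (ha : 0 < a) (hb : 0 < b) (hab : b < a)
    (hc : 0 < c) (hd : 0 < d) :
    ((R * (a + b) / (a - b) - R) / c = (R * (a + b) / (a - b) + R) / d) ↔ d / c = a / b := by
  have hab' : a - b ≠ 0 := by linarith
  rw [div_eq_div_iff hc.ne' hd.ne', div_eq_div_iff hc.ne' hb.ne']
  constructor
  · intro h
    have h2 : (R * (a + b) / (a - b) - R) * d * (a - b) = (R * (a + b) / (a - b) + R) * c * (a - b) := by
      rw [h]
    field_simp at h2
    nlinarith [h2]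
  · intro h
    field_simp
    nlinarith [h]

/-- Constant-ratio characterization of gapless/overlap-free crossing. For decreasing
positive speeds `μ₁ > μ₂ > … > μ_p` (`p ≥ 2`) and `x* = R(μ_{p−1}+μ_p)/(μ_{p−1}−μ_p)`,
the exiting time of each speed-`μᵢ` characteristic equals the entering time of the
speed-`μ_{i−1}` one at `x*` (i.e. `(x*−R)/μᵢ = (x*+R)/μ_{i−1}` for all `2 ≤ i ≤ p`)
iff the speeds form a geometric progression: `μ_{i−1}/μᵢ = μ_{p−1}/μ_p` for all such `i`. -/
theorem stmt_14 (R : ℝ) (hR : 0 < R) (p : ℕ) (hp : 2 ≤ p) (μ : ℕ → ℝ)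
    (hpos : ∀ i, 1 ≤ i → i ≤ p → 0 < μ i)
    (hdec : ∀ i, 1 ≤ i → i < p → μ (i + 1) < μ i) :
    ((∀ i, 2 ≤ i → i ≤ p →
        (R * (μ (p - 1) + μ p) / (μ (p - 1) - μ p) - R) / μ i
          = (R * (μ (p - 1) + μ p) / (μ (p - 1) - μ p) + R) / μ (i - 1))
      ↔ (∀ i, 2 ≤ i → i ≤ p → μ (i - 1) / μ i = μ (p - 1) / μ p)) := by
  have hp1 : 1 ≤ p - 1 := by omega
  have hp2 : p - 1 ≤ p := by omega
  have ha : 0 < μ (p - 1) := hpos _ hp1 hp2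
  have hb : 0 < μ p := hpos _ (by omega) le_rfl
  have hab : μ p < μ (p - 1) := by
    have := hdec (p - 1) hp1 (by omega)
    rwa [show p - 1 + 1 = p by omega] at this
  constructor <;> intro h i h2 hip
  · have := h i h2 hip
    exact ((aux_14 R (μ (p-1)) (μ p) (μ i) (μ (i-1)) hR ha hb hab
      (hpos i (by omega) hip) (hpos (i-1) (by omega) (by omega))).mp this)
  · exact ((aux_14 R (μ (p-1)) (μ p) (μ i) (μ (i-1)) hR ha hb hab
      (hpos i (by omega) hip) (hpos (i-1) (by omega) (by omega))).mpr (h i h2 hip))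
end
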